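/- Let q ≥ 2 and let μ_q := {ζ ∈ ℂ : ζ^q = 1}. Consider the following family of polynomials in ℂ[x,y,z]: the coordinates x and z, together with xz − ξ for ξ ∈ μ_q, z − ζ for ζ ∈ μ_q, and y − θx for θ ∈ μ_q. Then for every point p = (p_1,p_2,p_3) ∈ ℂ^3 such that not both p_1 = 0 and p_2 = 0, the gradients at p of those members of the family that vanish at p form a linearly independent family of vectors in ℂ^3. -/
import Mathlib


open MvPolynomial

/-- The family of polynomials `x, z, xz − ξ (ξ^q = 1), z − ζ (ζ^q = 1), y − θx (θ^q = 1)`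
in `ℂ[x,y,z]`: the irreducible factors of the local equations of the divisor `X̃` in the
second chart of the second blow-up in the variant of Hironaka's example. -/
noncomputable def hironakaChart2Family (q : ℕ) :
    Fin 2 ⊕ Fin 3 × {ζ : ℂ // ζ ^ q = 1} → MvPolynomial (Fin 3) ℂ :=
  fun i => match i with
  | .inl j => if j = 0 then X 0 else X 2
  | .inr (j, ζ) =>
      if j = 0 then X 0 * X 2 - C ζ.1
      else if j = 1 then X 2 - C ζ.1
      else X 1 - C ζ.1 * X 0

/-- At every point `p ∈ ℂ^3` with not both `p_1 = 0` and `p_2 = 0` (i.e. outside the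
curve `B_i = {x = y = 0}`), the gradients of those members of the family
`x, z, xz − ξ, z − ζ, y − θx` (with `ξ, ζ, θ` ranging over the `q`-th roots of unity)
that vanish at `p` are linearly independent over `ℂ`: the divisor `X̃` has normal
crossings in this chart outside `B_i`. -/
theorem hironaka_chart2_normal_crossings (q : ℕ) (hq : 2 ≤ q) (p : Fin 3 → ℂ)
    (hp : ¬ (p 0 = 0 ∧ p 1 = 0)) :
    LinearIndependent ℂ
      (fun s : {i : Fin 2 ⊕ Fin 3 × {ζ : ℂ // ζ ^ q = 1} //
          eval p (hironakaChart2Family q i) = 0} =>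
        fun j : Fin 3 => eval p (pderiv j (hironakaChart2Family q s.1))) := by
  classical
  have hq0 : q ≠ 0 := by omega
  have hroot : ∀ ζ : {ζ : ℂ // ζ ^ q = 1}, (ζ : ℂ) ≠ 0 := by
    rintro ⟨ζ, hζ⟩ h
    simp only at h
    rw [h, zero_pow hq0] at hζ
    exact zero_ne_one hζ
  -- the three candidate gradient vectors
  set a : ℂ := if p 0 * p 2 = 0 then 1 else p 2 with ha
  set b : ℂ := if p 0 * p 2 = 0 then 0 else p 0 with hb
  set c : ℂ := if p 0 = 0 then 0 else -(p 1 / p 0) with hc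
  have haz : a ≠ 0 := by
    rw [ha]; split_ifs with h
    · exact one_ne_zero
    · intro h2; exact h (by rw [h2, mul_zero])
  set v : Fin 3 → Fin 3 → ℂ := ![![a, 0, b], ![c, 1, 0], ![0, 0, 1]] with hv_def
  have hv : LinearIndependent ℂ v := by
    rw [Fintype.linearIndependent_iff]
    intro g hg
    have h0 := congrFun hg 0
    have h1 := congrFun hg 1
    have h2 := congrFun hg 2
    simp [hv_def, Fin.sum_univ_three] at h0 h1 h2
    -- h1 : g 1 = 0 (up to arithmetic)
    have hg1 : g 1 = 0 := by linear_combination h1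
    have hg0 : g 0 = 0 := by
      have : g 0 * a = 0 := by linear_combination h0 - c * hg1
      exact (mul_eq_zero.mp this).resolve_right haz
    have hg2 : g 2 = 0 := by linear_combination h2 - b * hg0
    intro i; fin_cases i <;> assumption
  set E : Fin 2 ⊕ Fin 3 × {ζ : ℂ // ζ ^ q = 1} → Fin 3 := fun i =>
    match i with
    | .inl j => if j = 0 then 0 else 2
    | .inr (j, _) => if j = 0 then 0 else if j = 1 then 2 else 1
    with hE_def
  have key : (fun s : {i : Fin 2 ⊕ Fin 3 × {ζ : ℂ // ζ ^ q = 1} //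
          eval p (hironakaChart2Family q i) = 0} =>
        fun j : Fin 3 => eval p (pderiv j (hironakaChart2Family q s.1)))
      = v ∘ (fun s => E s.1) := by
    funext s
    obtain ⟨i, hi⟩ := s
    obtain j | ⟨j, ζ⟩ := i
    · fin_cases j
      · -- X 0, p 0 = 0
        have hp0 : p 0 = 0 := by simpa [hironakaChart2Family] using hi
        have hab : p 0 * p 2 = 0 := by rw [hp0, zero_mul]
        funext j; fin_cases j <;>
          simp [hironakaChart2Family, hv_def, hE_def, ha, hb, hab]
      · -- X 2
        funext j; fin_cases j <;> simp [hironakaChart2Family, hv_def, hE_def]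
    · fin_cases j
      · -- X 0 * X 2 - C ζ
        have hxz : p 0 * p 2 = ζ.1 := by
          simpa [hironakaChart2Family, sub_eq_zero] using hi
        have hab : ¬ (p 0 * p 2 = 0) := by rw [hxz]; exact hroot ζ
        funext j; fin_cases j <;>
          simp [hironakaChart2Family, hv_def, hE_def, ha, hb, hab]
      · -- X 2 - C ζ
        funext j; fin_cases j <;> simp [hironakaChart2Family, hv_def, hE_def]
      · -- X 1 - C ζ * X 0
        have hy : p 1 = ζ.1 * p 0 := by
          simpa [hironakaChart2Family, sub_eq_zero] using hi
        have hp0 : p 0 ≠ 0 := by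
          intro h0; exact hp ⟨h0, by rw [hy, h0, mul_zero]⟩
        have hθ : -(p 1 / p 0) = -ζ.1 := by
          rw [hy]; field_simp
        funext j; fin_cases j <;>
          simp [hironakaChart2Family, hv_def, hE_def, hc, hp0, hθ]
  have hinj : Function.Injective
      (fun s : {i : Fin 2 ⊕ Fin 3 × {ζ : ℂ // ζ ^ q = 1} //
          eval p (hironakaChart2Family q i) = 0} => E s.1) := by
    rintro ⟨i, hi⟩ ⟨i', hi'⟩ h
    simp only at h
    apply Subtype.ext
    obtain j | ⟨j, ζ⟩ := i <;> obtain j' | ⟨j', ζ'⟩ := i' <;>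
      fin_cases j <;> fin_cases j' <;> (try rfl) <;> (try (simp [hE_def] at h))
    · -- x and xz - ξ both vanish: impossible
      exfalso
      have h0 : p 0 = 0 := by simpa [hironakaChart2Family] using hi
      have hxz : p 0 * p 2 = ζ'.1 := by
        simpa [hironakaChart2Family, sub_eq_zero] using hi'
      exact hroot ζ' (by rw [← hxz, h0, zero_mul])
    · -- z and z - ζ both vanish: impossible
      exfalso
      have h2 : p 2 = 0 := by simpa [hironakaChart2Family] using hi
      have hz : p 2 = ζ'.1 := by
        simpa [hironakaChart2Family, sub_eq_zero] using hi'
      exact hroot ζ' (by rw [← hz, h2])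
    · exfalso
      have h0 : p 0 = 0 := by simpa [hironakaChart2Family] using hi'
      have hxz : p 0 * p 2 = ζ.1 := by
        simpa [hironakaChart2Family, sub_eq_zero] using hi
      exact hroot ζ (by rw [← hxz, h0, zero_mul])
    · exfalso
      have h2 : p 2 = 0 := by simpa [hironakaChart2Family] using hi'
      have hz : p 2 = ζ.1 := by
        simpa [hironakaChart2Family, sub_eq_zero] using hi
      exact hroot ζ (by rw [← hz, h2])
    · have h1 : p 0 * p 2 = ζ.1 := by
        simpa [hironakaChart2Family, sub_eq_zero] using hi
      have h2 : p 0 * p 2 = ζ'.1 := by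
        simpa [hironakaChart2Family, sub_eq_zero] using hi'
      have : ζ = ζ' := Subtype.ext (by rw [← h1, h2])
      subst this; rfl
    · have h1 : p 2 = ζ.1 := by
        simpa [hironakaChart2Family, sub_eq_zero] using hi
      have h2 : p 2 = ζ'.1 := by
        simpa [hironakaChart2Family, sub_eq_zero] using hi'
      have : ζ = ζ' := Subtype.ext (by rw [← h1, h2])
      subst this; rfl
    · have h1 : p 1 = ζ.1 * p 0 := by
        simpa [hironakaChart2Family, sub_eq_zero] using hi
      have h2 : p 1 = ζ'.1 * p 0 := by
        simpa [hironakaChart2Family, sub_eq_zero] using hi'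
      have hp0 : p 0 ≠ 0 := by
        intro h0; exact hp ⟨h0, by rw [h1, h0, mul_zero]⟩
      have : ζ = ζ' := Subtype.ext (mul_right_cancel₀ hp0 (by rw [← h1, h2]))
      subst this; rfl
  rw [key]
  exact hv.comp _ hinj
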